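/- Both the IIS solution R^IIS and the plurality solution R^P satisfy II-CCON, PI-CCON, and PP-CCON, but neither satisfies IP-CCON. -/

import Mathlib

namespace SocRank

/-- A coalitional ranking (a weak order on a set of feasible nonempty coalitions),
represented by its list of equivalence classes, listed from best to worst. -/
structure CoalRanking (X : Type*) where
  classes : List (Finset (Finset X))
  class_nonempty : ∀ C ∈ classes, C.Nonempty
  coal_nonempty : ∀ C ∈ classes, ∀ S ∈ C, S.Nonempty
  classes_disjoint : classes.Pairwise Disjoint

namespace CoalRanking

variable {X : Type*}

/-- The coalition domain `𝒟(≿)` of a coalitional ranking. -/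
def domain [DecidableEq X] (r : CoalRanking X) : Finset (Finset X) :=
  r.classes.foldr (· ∪ ·) ∅

/-- The list of equivalence classes of the restriction of a ranking to a set `D`
of coalitions. -/
def restrictClasses [DecidableEq X] (r : CoalRanking X) (D : Finset (Finset X)) :
    List (Finset (Finset X)) :=
  (r.classes.map (· ∩ D)).filter (fun C => decide C.Nonempty)

/-- Merging two lists of equivalence classes by aligning them at the top. -/
def zipUnion [DecidableEq X] :
    List (Finset (Finset X)) → List (Finset (Finset X)) → List (Finset (Finset X))
  | [], M => M
  | L, [] => L
  | A :: L, B :: M => (A ∪ B) :: zipUnion L M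

/-- `r` is a sum of the disjoint rankings `r₁` and `r₂`: its domain is the union of
the two domains and its restriction to the domain of `rᵢ` is `rᵢ`. -/
def IsSum [DecidableEq X] (r r₁ r₂ : CoalRanking X) : Prop :=
  Disjoint r₁.domain r₂.domain ∧
  r.domain = r₁.domain ∪ r₂.domain ∧
  r.restrictClasses r₁.domain = r₁.classes ∧
  r.restrictClasses r₂.domain = r₂.classes

/-- `r` is the concatenation sum `r₁ · r₂` of the disjoint rankings `r₁` and `r₂`. -/
def IsConcatSum [DecidableEq X] (r r₁ r₂ : CoalRanking X) : Prop :=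
  Disjoint r₁.domain r₂.domain ∧ r.classes = r₁.classes ++ r₂.classes

/-- `r` is the top-aligned sum `r₁ ⊨ r₂` of the disjoint rankings `r₁` and `r₂`. -/
def IsTopAlignedSum [DecidableEq X] (r r₁ r₂ : CoalRanking X) : Prop :=
  Disjoint r₁.domain r₂.domain ∧ r.classes = zipUnion r₁.classes r₂.classes

/-- `r` is the bottom-aligned sum `r₁ ⫤ r₂` of the disjoint rankings `r₁` and `r₂`. -/
def IsBottomAlignedSum [DecidableEq X] (r r₁ r₂ : CoalRanking X) : Prop :=
  Disjoint r₁.domain r₂.domain ∧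
  r.classes = (zipUnion r₁.classes.reverse r₂.classes.reverse).reverse

/-- Renaming the individuals of a coalitional ranking by a permutation `σ` of `X`:
the ranking `≿^σ`. -/
def mapPerm [DecidableEq X] (σ : Equiv.Perm X) (r : CoalRanking X) : CoalRanking X where
  classes := r.classes.map (fun C => C.image (fun S => S.image σ))
  class_nonempty := by
    intro C hC
    simp only [List.mem_map] at hC
    obtain ⟨C₀, hC₀, rfl⟩ := hC
    exact (r.class_nonempty C₀ hC₀).image _
  coal_nonempty := by
    intro C hC S hS
    simp only [List.mem_map] at hC
    obtain ⟨C₀, hC₀, rfl⟩ := hC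
    simp only [Finset.mem_image] at hS
    obtain ⟨S₀, hS₀, rfl⟩ := hS
    exact (r.coal_nonempty C₀ hC₀ S₀ hS₀).image _
  classes_disjoint := by
    refine List.Pairwise.map _ (fun {A B} h => ?_) r.classes_disjoint
    exact (Finset.disjoint_image
      (Finset.image_injective σ.injective)).mpr h

/-- Renaming the coalitions of a coalitional ranking by a permutation `π` of the set of
coalitions (mapping nonempty sets to nonempty sets): the ranking `≿_π`. -/
def mapCoalPerm [DecidableEq X] (π : Equiv.Perm (Finset X))
    (hπ : ∀ S : Finset X, S.Nonempty → (π S).Nonempty) (r : CoalRanking X) :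
    CoalRanking X where
  classes := r.classes.map (fun C => C.image π)
  class_nonempty := by
    intro C hC
    simp only [List.mem_map] at hC
    obtain ⟨C₀, hC₀, rfl⟩ := hC
    exact (r.class_nonempty C₀ hC₀).image _
  coal_nonempty := by
    intro C hC S hS
    simp only [List.mem_map] at hC
    obtain ⟨C₀, hC₀, rfl⟩ := hC
    simp only [Finset.mem_image] at hS
    obtain ⟨S₀, hS₀, rfl⟩ := hS
    exact hπ S₀ (r.coal_nonempty C₀ hC₀ S₀ hS₀)
  classes_disjoint := by
    refine List.Pairwise.map _ (fun {A B} h => ?_) r.classes_disjoint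
    exact (Finset.disjoint_image π.injective).mpr h

end CoalRanking

open CoalRanking

variable {X : Type*}

/-- A social ranking solution: a map assigning to every coalitional ranking a binary
relation on the individuals. -/
abbrev SRSMap (X : Type*) := CoalRanking X → X → X → Prop

/-- The symmetric part `I` of the social ranking. -/
def Ind (R : SRSMap X) (r : CoalRanking X) (x y : X) : Prop := R r x y ∧ R r y x

/-- The asymmetric part `P` of the social ranking. -/
def Pref (R : SRSMap X) (r : CoalRanking X) (x y : X) : Prop := R r x y ∧ ¬ R r y x

/-- Conditions (1)-(4) of consistency for the triple `(r₁, r₂, r)`. -/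
def ConsistentAt (R : SRSMap X) (r₁ r₂ r : CoalRanking X) : Prop :=
  ∀ x y : X,
    (Ind R r₁ x y → Ind R r₂ x y → Ind R r x y) ∧
    (Ind R r₁ x y → Pref R r₂ x y → Pref R r x y) ∧
    (Pref R r₁ x y → Ind R r₂ x y → Pref R r x y) ∧
    (Pref R r₁ x y → Pref R r₂ x y → Pref R r x y)

/-- Consistency (CON). -/
def CON [DecidableEq X] (R : SRSMap X) : Prop :=
  ∀ r₁ r₂ r : CoalRanking X, IsSum r r₁ r₂ → ConsistentAt R r₁ r₂ r

/-- Concatenation consistency (CCON). -/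
def CCON [DecidableEq X] (R : SRSMap X) : Prop :=
  ∀ r₁ r₂ r : CoalRanking X, IsConcatSum r r₁ r₂ → ConsistentAt R r₁ r₂ r

/-- Top-aligned consistency (TCON). -/
def TCON [DecidableEq X] (R : SRSMap X) : Prop :=
  ∀ r₁ r₂ r : CoalRanking X, IsTopAlignedSum r r₁ r₂ → ConsistentAt R r₁ r₂ r

/-- Bottom-aligned consistency (BCON). -/
def BCON [DecidableEq X] (R : SRSMap X) : Prop :=
  ∀ r₁ r₂ r : CoalRanking X, IsBottomAlignedSum r r₁ r₂ → ConsistentAt R r₁ r₂ r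

/-- II-concatenation consistency. -/
def IICCON [DecidableEq X] (R : SRSMap X) : Prop :=
  ∀ r₁ r₂ r : CoalRanking X, IsConcatSum r r₁ r₂ →
    ∀ x y : X, Ind R r₁ x y → Ind R r₂ x y → Ind R r x y

/-- IP-concatenation consistency. -/
def IPCCON [DecidableEq X] (R : SRSMap X) : Prop :=
  ∀ r₁ r₂ r : CoalRanking X, IsConcatSum r r₁ r₂ →
    ∀ x y : X, Ind R r₁ x y → Pref R r₂ x y → Pref R r x y

/-- PI-concatenation consistency. -/
def PICCON [DecidableEq X] (R : SRSMap X) : Prop :=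
  ∀ r₁ r₂ r : CoalRanking X, IsConcatSum r r₁ r₂ →
    ∀ x y : X, Pref R r₁ x y → Ind R r₂ x y → Pref R r x y

/-- PP-concatenation consistency. -/
def PPCCON [DecidableEq X] (R : SRSMap X) : Prop :=
  ∀ r₁ r₂ r : CoalRanking X, IsConcatSum r r₁ r₂ →
    ∀ x y : X, Pref R r₁ x y → Pref R r₂ x y → Pref R r x y

/-- `x_k`: the number of coalitions of the class `C` containing `x`. -/
def cnt [DecidableEq X] (x : X) (C : Finset (Finset X)) : ℕ :=
  (C.filter (fun S => x ∈ S)).card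

/-- The vector `θ_≿(x) = (x₁, …, x_l)`. -/
def theta [DecidableEq X] (r : CoalRanking X) (x : X) : List ℕ :=
  r.classes.map (cnt x)

/-- `sign`: `1` on positive numbers, `0` otherwise. -/
def sgn (n : ℕ) : ℕ := if 0 < n then 1 else 0

/-- The vector `θ̇_≿(x) = (sign(x₁), …, sign(x_l))`. -/
def thetaDot [DecidableEq X] (r : CoalRanking X) (x : X) : List ℕ :=
  (theta r x).map sgn

/-- The lexicographic order `≥^L` on vectors (of equal length). -/
def lexGE : List ℕ → List ℕ → Prop
  | _, [] => True
  | [], _ :: _ => False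
  | a :: as, b :: bs => b < a ∨ (a = b ∧ lexGE as bs)

/-- The lexicographic excellence solution (lex-cel) `R^L`. -/
def lexcel [DecidableEq X] : SRSMap X := fun r x y => lexGE (theta r x) (theta r y)

/-- The sign lexicographic excellence solution (S lex-cel) `R^{SL}`. -/
def slexcel [DecidableEq X] : SRSMap X := fun r x y => lexGE (thetaDot r x) (thetaDot r y)

/-- The plurality solution `R^P`. -/
def plurality [DecidableEq X] : SRSMap X := fun r x y =>
  (theta r y).headD 0 ≤ (theta r x).headD 0

/-- The sign plurality solution `R^{SP}`. -/
def splurality [DecidableEq X] : SRSMap X := fun r x y =>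
  sgn ((theta r y).headD 0) ≤ sgn ((theta r x).headD 0)

/-- The anti-plurality solution `R^{AP}`. -/
def antiplurality [DecidableEq X] : SRSMap X := fun r x y =>
  (theta r x).getLastD 0 ≤ (theta r y).getLastD 0

/-- `e_≿(x)`: the largest `k` such that `x` belongs to every coalition of each of the
first `k` equivalence classes. -/
def eIIS [DecidableEq X] (r : CoalRanking X) (x : X) : ℕ :=
  (r.classes.takeWhile (fun C => decide (∀ S ∈ C, x ∈ S))).length

/-- The intersection initial segment solution (IIS) `R^{IIS}`. -/
def iis [DecidableEq X] : SRSMap X := fun r x y => eIIS r y ≤ eIIS r x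

/-- The index of the equivalence class a coalition belongs to. -/
def classIdx [DecidableEq X] (r : CoalRanking X) (S : Finset X) : ℕ :=
  r.classes.findIdx (fun C => decide (S ∈ C))

/-- `C_{xy}`: the number of CP comparisons in favour of `x` against `y`. -/
def cpCount [DecidableEq X] [Fintype X] (r : CoalRanking X) (x y : X) : ℕ :=
  ((Finset.univ : Finset (Finset X)).filter (fun S =>
    S.Nonempty ∧ x ∉ S ∧ y ∉ S ∧ insert x S ∈ r.domain ∧ insert y S ∈ r.domain ∧
    classIdx r (insert x S) < classIdx r (insert y S))).card

/-- The Ceteris Paribus majority solution `R^{CPM}`. -/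
def cpm [DecidableEq X] [Fintype X] : SRSMap X := fun r x y =>
  cpCount r y x ≤ cpCount r x y

/-- Neutrality (NT). -/
def NT [DecidableEq X] (R : SRSMap X) : Prop :=
  ∀ (σ : Equiv.Perm X) (r : CoalRanking X) (x y : X),
    R (r.mapPerm σ) (σ x) (σ y) ↔ R r x y

/-- Weak coalitional anonymity (WCA). -/
def WCA [DecidableEq X] (R : SRSMap X) : Prop :=
  ∀ (x y : X) (π : Equiv.Perm (Finset X))
    (hπ : ∀ S : Finset X, S.Nonempty → (π S).Nonempty),
    (∀ S : Finset X, x ∈ S → x ∈ π S) → (∀ S : Finset X, y ∈ S → y ∈ π S) →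
    ∀ r : CoalRanking X,
      (R (r.mapCoalPerm π hπ) x y ↔ R r x y) ∧ (R (r.mapCoalPerm π hπ) y x ↔ R r y x)

/-- The weak union very important person property (WUVIP). -/
def WUVIP (R : SRSMap X) : Prop :=
  ∀ (r : CoalRanking X) (A B : Finset (Finset X)), r.classes = [A, B] →
    ∀ x y : X, (∃ S ∈ A, x ∈ S) → (∀ S ∈ A, y ∉ S) → Pref R r x y

/-- All indifference all winners (AIAW). -/
def AIAW [DecidableEq X] (R : SRSMap X) : Prop :=
  ∀ r : CoalRanking X, r.classes.length ≤ 1 →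
    (∀ x y : X, (∃ S ∈ r.domain, x ∈ S) → (∃ S ∈ r.domain, y ∈ S) → Ind R r x y) ∧
    (∀ x z : X, (∃ S ∈ r.domain, x ∈ S) → (∀ S ∈ r.domain, z ∉ S) → Pref R r x z)

/-- Independence of the decomposition of the worst sets (IDWS). -/
def IDWS [DecidableEq X] (R : SRSMap X) : Prop :=
  ∀ (r r' : CoalRanking X) (L G : List (Finset (Finset X))) (W : Finset (Finset X)),
    L ≠ [] → r.classes = L ++ [W] → r'.classes = L ++ G →
    G.foldr (· ∪ ·) ∅ = W →
    ∀ x y : X, Pref R r x y → Pref R r' x y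

/-- Independence of the addition of the worst sets (IAWS). -/
def IAWS [DecidableEq X] (R : SRSMap X) : Prop :=
  ∀ (r r' : CoalRanking X) (G : Finset (Finset X)),
    r'.classes = r.classes ++ [G] → (∀ S ∈ G, S ∉ r.domain) →
    ∀ x y : X, Pref R r x y → Pref R r' x y

/-- Tops-only (TO). -/
def TO (R : SRSMap X) : Prop :=
  ∀ (r r' : CoalRanking X) (A : Finset (Finset X)),
    r.classes.head? = some A → r'.classes.head? = some A → R r = R r'

/-- The dual S lex-cel `R^{DSL}`. -/
def dslexcel [DecidableEq X] : SRSMap X := fun r x y =>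
  lexGE ((thetaDot r y).reverse) ((thetaDot r x).reverse)

/-- The inverse dual S lex-cel `R^{IDSL}`. -/
def idslexcel [DecidableEq X] : SRSMap X := fun r x y => dslexcel r y x

/-- The vector `θ̃_≿(x)` used by the S lex-cel with precedence on unanimity. -/
def tildeTheta [DecidableEq X] (r : CoalRanking X) (x : X) : List ℕ :=
  r.classes.map (fun C => if cnt x C = C.card then 2 else if 0 < cnt x C then 1 else 0)

/-- The S lex-cel with a particular precedence on unanimity `R^{SLUN}`. -/
def slun [DecidableEq X] : SRSMap X := fun r x y =>
  lexGE (tildeTheta r x) (tildeTheta r y)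

/-- The S sum score `Σ_k sign(x_k)`. -/
def ssum [DecidableEq X] (r : CoalRanking X) (x : X) : ℕ := (thetaDot r x).sum

/-- The S sum rule with tie-breaking by S lex-cel `R^{SSUM,SL}`. -/
def ssumSL [DecidableEq X] : SRSMap X := fun r x y =>
  ssum r y < ssum r x ∨ (ssum r x = ssum r y ∧ slexcel r x y)

end SocRank

open SocRank

section Aux

lemma takeWhile_append_len {α : Type*} (p : α → Bool) (L M : List α) :
    ((L ++ M).takeWhile p).length =
      if (L.takeWhile p).length = L.length then L.length + (M.takeWhile p).length
      else (L.takeWhile p).length := by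
  induction L with
  | nil => simp
  | cons a L ih =>
    by_cases h : p a
    · simp only [List.cons_append, List.takeWhile_cons, h, if_true, List.length_cons, ih]
      have := (List.takeWhile_sublist p (l := L)).length_le
      split_ifs <;> omega
    · simp [List.takeWhile_cons, h]

variable {X : Type*} [DecidableEq X]

lemma eIIS_concat {r r₁ r₂ : CoalRanking X}
    (h : r.classes = r₁.classes ++ r₂.classes) (x : X) :
    eIIS r x = if eIIS r₁ x = r₁.classes.length
      then r₁.classes.length + eIIS r₂ x else eIIS r₁ x := by
  unfold eIIS
  rw [h, takeWhile_append_len]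

lemma eIIS_le (r : CoalRanking X) (x : X) :
    eIIS r x ≤ r.classes.length := (List.takeWhile_sublist _).length_le

lemma plur_head {r r₁ r₂ : CoalRanking X}
    (h : r.classes = r₁.classes ++ r₂.classes) (x : X) :
    (theta r x).headD 0 =
      if r₁.classes = [] then (theta r₂ x).headD 0 else (theta r₁ x).headD 0 := by
  rcases hc : r₁.classes with _ | ⟨C, L⟩ <;> simp [theta, h, hc]

lemma head_nil {r₁ : CoalRanking X} (hc : r₁.classes = []) (x : X) :
    (theta r₁ x).headD 0 = 0 := by simp [theta, hc]

/-- one-class coalitional ranking -/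
def oneClass (C : Finset (Finset X)) (hC : C.Nonempty)
    (h : ∀ S ∈ C, S.Nonempty) : CoalRanking X :=
  ⟨[C], by simpa, by simpa, by simp⟩

/-- two-class coalitional ranking -/
def twoClass (A B : Finset (Finset X)) (hA : A.Nonempty) (hB : B.Nonempty)
    (hA' : ∀ S ∈ A, S.Nonempty) (hB' : ∀ S ∈ B, S.Nonempty)
    (hd : Disjoint A B) : CoalRanking X :=
  ⟨[A, B], by simp_all, by simp_all, by simp [hd]⟩

end Aux

/-- both IIS and plurality satisfy II-CCON, PI-CCON and PP-CCON,
but neither satisfies IP-CCON. -/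
theorem iis_plurality_partial_ccon {X : Type*} [DecidableEq X] [Fintype X]
    (hX : 3 ≤ Fintype.card X) :
    (IICCON (iis : SRSMap X) ∧ PICCON (iis : SRSMap X) ∧ PPCCON (iis : SRSMap X) ∧
      ¬ IPCCON (iis : SRSMap X)) ∧
    (IICCON (plurality : SRSMap X) ∧ PICCON (plurality : SRSMap X) ∧
      PPCCON (plurality : SRSMap X) ∧ ¬ IPCCON (plurality : SRSMap X)) := by
  obtain ⟨s, -, hs3⟩ := Finset.exists_subset_card_eq (s := (Finset.univ : Finset X)) (n := 3) (by simpa)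
  obtain ⟨x, y, z, hxy, hxz, hyz, rfl⟩ := Finset.card_eq_three.mp hs3
  -- some finset inequalities
  have h1 : ({x} : Finset X) ≠ {x, z} := by
    intro h
    have : z ∈ ({x} : Finset X) := h ▸ (by simp)
    simp only [Finset.mem_singleton] at this
    exact hxz this.symm
  have h2 : ({y} : Finset X) ≠ {x, z} := by
    intro h
    have : x ∈ ({y} : Finset X) := h ▸ (by simp)
    simp only [Finset.mem_singleton] at this
    exact hxy this
  have h3 : ({x, y} : Finset X) ≠ {x} := by
    intro h
    have : y ∈ ({x} : Finset X) := h ▸ (by simp)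
    simp only [Finset.mem_singleton] at this
    exact hxy this.symm
  constructor
  · -- IIS
    refine ⟨?_, ?_, ?_, ?_⟩
    · intro r₁ r₂ r hsum a b hI1 hI2
      have hx := eIIS_concat hsum.2 a
      have hy := eIIS_concat hsum.2 b
      have lx := eIIS_le r₁ a
      have ly := eIIS_le r₁ b
      simp only [Ind, iis] at *
      rw [hx, hy]
      split_ifs <;> omega
    · intro r₁ r₂ r hsum a b hP1 hI2
      have hx := eIIS_concat hsum.2 a
      have hy := eIIS_concat hsum.2 b
      have lx := eIIS_le r₁ a
      have ly := eIIS_le r₁ b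
      simp only [Ind, Pref, iis] at *
      rw [hx, hy]
      split_ifs <;> omega
    · intro r₁ r₂ r hsum a b hP1 hP2
      have hx := eIIS_concat hsum.2 a
      have hy := eIIS_concat hsum.2 b
      have lx := eIIS_le r₁ a
      have ly := eIIS_le r₁ b
      simp only [Ind, Pref, iis] at *
      rw [hx, hy]
      split_ifs <;> omega
    · -- counterexample for IIS + IP
      intro hIP
      have hAne : ({({x} : Finset X), ({y} : Finset X)} : Finset (Finset X)).Nonempty :=
        ⟨{x}, by simp⟩
      have hAco : ∀ S ∈ ({({x} : Finset X), ({y} : Finset X)} : Finset (Finset X)),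
          S.Nonempty := by
        intro S hS
        simp only [Finset.mem_insert, Finset.mem_singleton] at hS
        rcases hS with rfl | rfl
        · exact ⟨x, by simp⟩
        · exact ⟨y, by simp⟩
      have hBne : ({({x, z} : Finset X)} : Finset (Finset X)).Nonempty := ⟨{x, z}, by simp⟩
      have hBco : ∀ S ∈ ({({x, z} : Finset X)} : Finset (Finset X)), S.Nonempty := by
        intro S hS
        simp only [Finset.mem_singleton] at hS
        subst hS
        exact ⟨x, by simp⟩
      have hd : Disjoint ({({x} : Finset X), ({y} : Finset X)} : Finset (Finset X))
          ({({x, z} : Finset X)} : Finset (Finset X)) := by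
        simp [Finset.disjoint_left, h1, h2]
      set r₁ : CoalRanking X := oneClass _ hAne hAco with hr₁
      set r₂ : CoalRanking X := oneClass _ hBne hBco with hr₂
      set r : CoalRanking X := twoClass _ _ hAne hBne hAco hBco hd with hr
      have hsum : CoalRanking.IsConcatSum r r₁ r₂ := by
        constructor
        · simpa [CoalRanking.domain, oneClass, hr₁, hr₂] using hd
        · rfl
      have e1x : eIIS r₁ x = 0 := by
        simp [eIIS, oneClass, hr₁, List.takeWhile_cons, decide_eq_true_eq, hxy, Ne.symm hxy]
      have e1y : eIIS r₁ y = 0 := by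
        simp [eIIS, oneClass, hr₁, List.takeWhile_cons, decide_eq_true_eq, hxy, Ne.symm hxy]
      have e2x : eIIS r₂ x = 1 := by
        simp [eIIS, oneClass, hr₂, List.takeWhile_cons, decide_eq_true_eq]
      have e2y : eIIS r₂ y = 0 := by
        simp [eIIS, oneClass, hr₂, List.takeWhile_cons, decide_eq_true_eq, hxy, Ne.symm hxy, hyz, Ne.symm hyz]
      have erx : eIIS r x = 0 := by
        simp [eIIS, twoClass, hr, List.takeWhile_cons, decide_eq_true_eq, hxy, Ne.symm hxy]
      have ery : eIIS r y = 0 := by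
        simp [eIIS, twoClass, hr, List.takeWhile_cons, decide_eq_true_eq, hxy, Ne.symm hxy]
      have := hIP r₁ r₂ r hsum x y (by constructor <;> simp [iis, e1x, e1y])
        (by constructor <;> simp [iis, e2x, e2y])
      exact this.2 (by simp [iis, erx, ery])
  · -- plurality
    refine ⟨?_, ?_, ?_, ?_⟩
    · intro r₁ r₂ r hsum a b hI1 hI2
      have hx := plur_head hsum.2 a
      have hy := plur_head hsum.2 b
      simp only [Ind, plurality] at *
      rw [hx, hy]
      split_ifs <;> omega
    · intro r₁ r₂ r hsum a b hP1 hI2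
      have hx := plur_head hsum.2 a
      have hy := plur_head hsum.2 b
      simp only [Ind, Pref, plurality] at *
      rw [hx, hy]
      split_ifs with hc
      · have n1 := head_nil hc a
        have n2 := head_nil hc b
        omega
      · omega
    · intro r₁ r₂ r hsum a b hP1 hP2
      have hx := plur_head hsum.2 a
      have hy := plur_head hsum.2 b
      simp only [Pref, plurality] at *
      rw [hx, hy]
      split_ifs with hc
      · have n1 := head_nil hc a
        have n2 := head_nil hc b
        omega
      · omega
    · -- counterexample for plurality + IP
      intro hIP
      have hAne : ({({x, y} : Finset X)} : Finset (Finset X)).Nonempty := ⟨{x, y}, by simp⟩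
      have hAco : ∀ S ∈ ({({x, y} : Finset X)} : Finset (Finset X)), S.Nonempty := by
        intro S hS
        simp only [Finset.mem_singleton] at hS
        subst hS
        exact ⟨x, by simp⟩
      have hBne : ({({x} : Finset X)} : Finset (Finset X)).Nonempty := ⟨{x}, by simp⟩
      have hBco : ∀ S ∈ ({({x} : Finset X)} : Finset (Finset X)), S.Nonempty := by
        intro S hS
        simp only [Finset.mem_singleton] at hS
        subst hS
        exact ⟨x, by simp⟩
      have hd : Disjoint ({({x, y} : Finset X)} : Finset (Finset X))
          ({({x} : Finset X)} : Finset (Finset X)) := by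
        simp [Finset.disjoint_left, h3]
      set r₁ : CoalRanking X := oneClass _ hAne hAco with hr₁
      set r₂ : CoalRanking X := oneClass _ hBne hBco with hr₂
      set r : CoalRanking X := twoClass _ _ hAne hBne hAco hBco hd with hr
      have hsum : CoalRanking.IsConcatSum r r₁ r₂ := by
        constructor
        · simpa [CoalRanking.domain, oneClass, hr₁, hr₂] using hd
        · rfl
      have t1x : (theta r₁ x).headD 0 = 1 := by
        simp [theta, oneClass, hr₁, cnt, Finset.filter_singleton]
      have t1y : (theta r₁ y).headD 0 = 1 := by
        simp [theta, oneClass, hr₁, cnt, Finset.filter_singleton]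
      have t2x : (theta r₂ x).headD 0 = 1 := by
        simp [theta, oneClass, hr₂, cnt, Finset.filter_singleton]
      have t2y : (theta r₂ y).headD 0 = 0 := by
        simp [theta, oneClass, hr₂, cnt, Finset.filter_singleton, Ne.symm hxy]
      have trx : (theta r x).headD 0 = 1 := by
        simp [theta, twoClass, hr, cnt, Finset.filter_singleton]
      have try' : (theta r y).headD 0 = 1 := by
        simp [theta, twoClass, hr, cnt, Finset.filter_singleton]
      have := hIP r₁ r₂ r hsum x y
        (by constructor <;> (simp only [plurality]; omega))
        (by constructor <;> (simp only [plurality]; omega))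
      exact this.2 (by simp only [plurality]; omega)
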